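/- Assume n ≤ m. The quasi-invariant q² = (z^N − w^N)^{2m+1} is annihilated by the Calogero–Moser operator 𝓛₁, i.e. the polynomial identity (∏_{k=0}^{2N−1}(ε^k·w − z))·∂z∂w q² = ∑_{k=0}^{2N−1} m_k·(∏_{0≤j≤2N−1, j≠k}(ε^j·w − z))·(ε^k·∂z q² − ∂w q²) holds in R. -/

import Mathlib

open MvPolynomial Finset

noncomputable section

/-- The polynomial ring `R = ℂ[z,w]`. -/
abbrev R2 : Type := MvPolynomial (Fin 2) ℂ

/-- `z`, the first variable. -/
def zP : R2 := X 0

/-- `w`, the second variable (playing the role of `z̄`). -/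
def wP : R2 := X 1

/-- `ε = exp(πi/N)`, a primitive `2N`-th root of unity. -/
def eps (N : ℕ) : ℂ := Complex.exp ((Real.pi : ℂ) * Complex.I / (N : ℂ))

/-- The reflection `σⱼ : z ↦ ε^j w, w ↦ ε^{-j} z` as a `ℂ`-algebra endomorphism. -/
def dihRefl (N j : ℕ) : R2 →ₐ[ℂ] R2 :=
  aeval (fun k : Fin 2 => if k = 0 then C (eps N ^ j) * X 1 else C (eps N ^ (-(j : ℤ))) * X 0)

/-- The multiplicity `mⱼ`: `m` for even `j`, `n` for odd `j`. -/
def mult (m n j : ℕ) : ℕ := if Even j then m else n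

/-- Quasi-invariance for the dihedral system `I₂(2N)` with multiplicities `(m,n)`. -/
def IsQuasiInv (N m n : ℕ) (p : R2) : Prop :=
  ∀ j < 2 * N, (zP - C (eps N ^ j) * wP) ^ (2 * mult m n j + 1) ∣ dihRefl N j p - p

/-- `p` is annihilated by the Calogero–Moser operator
`𝓛₁ = 4∂z∂w − 4∑ₖ mₖ(ε^k ∂z − ∂w)/(ε^k w − z)`, expressed as a polynomial identity
after clearing denominators. -/
def AnnL1 (N m n : ℕ) (p : R2) : Prop :=
  (∏ k ∈ Finset.range (2 * N), (C (eps N ^ k) * wP - zP)) *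
      (pderiv (0 : Fin 2) (pderiv (1 : Fin 2) p)) =
    ∑ k ∈ Finset.range (2 * N),
      C ((mult m n k : ℕ) : ℂ) *
        (∏ j ∈ (Finset.range (2 * N)).erase k, (C (eps N ^ j) * wP - zP)) *
        (C (eps N ^ k) * pderiv (0 : Fin 2) p - pderiv (1 : Fin 2) p)

lemma eps_prim {N : ℕ} (hN : 1 ≤ N) : IsPrimitiveRoot (eps N) (2 * N) := by
  have h := Complex.isPrimitiveRoot_exp (2 * N) (by positivity)
  have hN0 : (N : ℂ) ≠ 0 := Nat.cast_ne_zero.mpr (by omega)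
  have he : (2 * (Real.pi : ℂ) * Complex.I / ((2 * N : ℕ) : ℂ)) =
      (Real.pi : ℂ) * Complex.I / (N : ℂ) := by
    push_cast
    field_simp
  rwa [he] at h

lemma eps_pow_two_N {N : ℕ} (hN : 1 ≤ N) : eps N ^ (2 * N) = 1 :=
  (eps_prim hN).pow_eq_one

lemma eps_pow_N {N : ℕ} (hN : 1 ≤ N) : eps N ^ N = -1 := by
  have h1 : (eps N ^ N - 1) * (eps N ^ N + 1) = 0 := by
    have h2 := eps_pow_two_N hN
    rw [two_mul, pow_add] at h2
    linear_combination h2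
  rcases mul_eq_zero.mp h1 with h | h
  · exact absurd (by linear_combination h)
      ((eps_prim hN).pow_ne_one_of_pos_of_lt (by omega) (by omega))
  · linear_combination h

lemma eps_pow_eq_one_iff {N : ℕ} (hN : 1 ≤ N) (r : ℕ) :
    eps N ^ (2 * r) = 1 ↔ N ∣ r := by
  rw [(eps_prim hN).pow_eq_one_iff_dvd]
  constructor
  · rintro ⟨c, hc⟩; rw [mul_assoc] at hc; exact ⟨c, by omega⟩
  · rintro ⟨c, rfl⟩; exact ⟨c, by ring⟩

lemma geom_sum_eps {N : ℕ} (hN : 1 ≤ N) (r : ℕ) :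
    ∑ t ∈ range N, (eps N ^ (2 * r)) ^ t = if N ∣ r then (N : ℂ) else 0 := by
  by_cases h : N ∣ r
  · simp [if_pos h, (eps_pow_eq_one_iff hN r).mpr h]
  · rw [if_neg h, geom_sum_eq (fun hc => h ((eps_pow_eq_one_iff hN r).mp hc))]
    have : (eps N ^ (2 * r)) ^ N = 1 := by
      rw [← pow_mul, show 2 * r * N = 2 * N * r by ring, pow_mul, eps_pow_two_N hN, one_pow]
    simp [this]


lemma sum_range_two_mul (f : ℕ → ℂ) (N : ℕ) :
    ∑ k ∈ range (2 * N), f k = ∑ t ∈ range N, (f (2 * t) + f (2 * t + 1)) := by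
  induction N with
  | zero => simp
  | succ N ih =>
      rw [show 2 * (N + 1) = (2 * N + 1) + 1 by ring, sum_range_succ, sum_range_succ,
        ih, sum_range_succ]
      ring

lemma Ssum {N : ℕ} (hN : 1 ≤ N) (m n r : ℕ) :
    ∑ k ∈ range (2 * N), ((mult m n k : ℕ) : ℂ) * eps N ^ (k * r) =
      if N ∣ r then (N : ℂ) * ((m : ℂ) + (n : ℂ) * (-1) ^ (r / N)) else 0 := by
  rw [sum_range_two_mul]
  have hterm : ∀ t, ((mult m n (2 * t) : ℕ) : ℂ) * eps N ^ (2 * t * r) +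
      ((mult m n (2 * t + 1) : ℕ) : ℂ) * eps N ^ ((2 * t + 1) * r) =
      ((m : ℂ) + (n : ℂ) * eps N ^ r) * (eps N ^ (2 * r)) ^ t := by
    intro t
    have h1 : mult m n (2 * t) = m := by simp [mult]
    have h2 : mult m n (2 * t + 1) = n := by
      simp [mult, Nat.even_add_one, parity_simps]
    rw [h1, h2, show 2 * t * r = 2 * r * t by ring,
      show (2 * t + 1) * r = 2 * r * t + r by ring, pow_add, pow_mul]
    ring
  rw [Finset.sum_congr rfl (fun t _ => hterm t), ← Finset.mul_sum, geom_sum_eps hN]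
  by_cases h : N ∣ r
  · rw [if_pos h, if_pos h]
    obtain ⟨s, rfl⟩ := h
    have : eps N ^ (N * s) = (-1 : ℂ) ^ s := by rw [pow_mul, eps_pow_N hN]
    rw [this, Nat.mul_div_cancel_left s (by omega)]
    ring
  · simp [if_neg h]


lemma prodC {N : ℕ} (hN : 1 ≤ N) (z w : ℂ) :
    ∏ k ∈ range (2 * N), (eps N ^ k * w - z) = z ^ (2 * N) - w ^ (2 * N) := by
  have h := X_pow_sub_C_eq_prod (eps_prim hN) (n := 2 * N) (by omega)
    (rfl : w ^ (2 * N) = w ^ (2 * N))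
  have h2 := congrArg (Polynomial.eval z) h
  simp only [Polynomial.eval_sub, Polynomial.eval_pow, Polynomial.eval_X, Polynomial.eval_C,
    Polynomial.eval_prod] at h2
  calc ∏ k ∈ range (2 * N), (eps N ^ k * w - z)
      = ∏ k ∈ range (2 * N), (-1 : ℂ) * (z - eps N ^ k * w) := by
        apply Finset.prod_congr rfl; intros; ring
    _ = (-1 : ℂ) ^ (2 * N) * ∏ k ∈ range (2 * N), (z - eps N ^ k * w) := by
        rw [Finset.prod_mul_distrib, Finset.prod_const, Finset.card_range]
    _ = z ^ (2 * N) - w ^ (2 * N) := by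
        rw [← h2]; simp [pow_mul]

lemma prodR {N : ℕ} (hN : 1 ≤ N) :
    ∏ k ∈ range (2 * N), (C (eps N ^ k) * wP - zP) = zP ^ (2 * N) - wP ^ (2 * N) := by
  apply MvPolynomial.funext
  intro x
  have := prodC hN (x 0) (x 1)
  simpa [zP, wP] using this

lemma factor_ne_zero (N k : ℕ) : C (eps N ^ k) * wP - zP ≠ (0 : R2) := by
  intro h
  have h2 := congrArg (eval fun i : Fin 2 => if i = 0 then (1 : ℂ) else 0) h
  simp [zP, wP] at h2

lemma eraseR {N : ℕ} (hN : 1 ≤ N) {k : ℕ} (hk : k ∈ range (2 * N)) :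
    ∏ j ∈ (range (2 * N)).erase k, (C (eps N ^ j) * wP - zP) =
      -∑ i ∈ range (2 * N), zP ^ i * (C (eps N ^ k) * wP) ^ (2 * N - 1 - i) := by
  apply mul_left_cancel₀ (factor_ne_zero N k)
  rw [Finset.mul_prod_erase (range (2 * N)) (fun j => C (eps N ^ j) * wP - zP) hk, prodR hN]
  have hy : (C (eps N ^ k) * wP) ^ (2 * N) = wP ^ (2 * N) := by
    rw [mul_pow, ← C_pow, ← pow_mul, show k * (2 * N) = 2 * N * k by ring, pow_mul,
      eps_pow_two_N hN, one_pow, map_one, one_mul]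
  have hg := geom_sum₂_mul zP (C (eps N ^ k) * wP) (2 * N)
  rw [hy] at hg
  linear_combination -hg

lemma hdvd3 {N : ℕ} (hN : 1 ≤ N) (r : ℕ) (hr : r ≤ 2 * N) (h : N ∣ r) :
    r = 0 ∨ r = N ∨ r = 2 * N := by
  obtain ⟨c, rfl⟩ := h
  have hc : c ≤ 2 := Nat.le_of_mul_le_mul_left
    (by calc N * c ≤ 2 * N := hr
          _ = N * 2 := by ring) (by omega)
  interval_cases c <;> omega

lemma Ksum {N : ℕ} (hN : 1 ≤ N) (m n : ℕ) (z w : ℂ) :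
    ∑ k ∈ range (2 * N), ((mult m n k : ℕ) : ℂ) *
        (∑ i ∈ range (2 * N), z ^ i * (eps N ^ k * w) ^ (2 * N - 1 - i)) *
        (eps N ^ k * z ^ (N - 1) + w ^ (N - 1)) =
      2 * (m : ℂ) * (N : ℂ) * (z ^ (N - 1) * w ^ (N - 1) * (z ^ N + w ^ N)) := by
  have hswap : ∑ k ∈ range (2 * N), ((mult m n k : ℕ) : ℂ) *
        (∑ i ∈ range (2 * N), z ^ i * (eps N ^ k * w) ^ (2 * N - 1 - i)) *
        (eps N ^ k * z ^ (N - 1) + w ^ (N - 1)) =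
      ∑ i ∈ range (2 * N),
        ((∑ k ∈ range (2 * N), ((mult m n k : ℕ) : ℂ) * eps N ^ (k * (2 * N - i))) *
            (z ^ (i + (N - 1)) * w ^ (2 * N - 1 - i)) +
          (∑ k ∈ range (2 * N), ((mult m n k : ℕ) : ℂ) * eps N ^ (k * (2 * N - 1 - i))) *
            (z ^ i * w ^ ((2 * N - 1 - i) + (N - 1)))) := by
    have step1 : ∀ k ∈ range (2 * N), ((mult m n k : ℕ) : ℂ) *
        (∑ i ∈ range (2 * N), z ^ i * (eps N ^ k * w) ^ (2 * N - 1 - i)) *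
        (eps N ^ k * z ^ (N - 1) + w ^ (N - 1)) =
        ∑ i ∈ range (2 * N),
          ((((mult m n k : ℕ) : ℂ) * eps N ^ (k * (2 * N - i))) *
              (z ^ (i + (N - 1)) * w ^ (2 * N - 1 - i)) +
            (((mult m n k : ℕ) : ℂ) * eps N ^ (k * (2 * N - 1 - i))) *
              (z ^ i * w ^ ((2 * N - 1 - i) + (N - 1)))) := by
      intro k hk
      rw [Finset.mul_sum, Finset.sum_mul]
      refine Finset.sum_congr rfl fun i hi => ?_
      have hi2 : i < 2 * N := mem_range.mp hi
      have hE : eps N ^ (k * (2 * N - i)) =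
          eps N ^ (k * (2 * N - 1 - i)) * eps N ^ k := by
        rw [← pow_add, ← Nat.mul_succ]
        congr 2
        omega
      rw [mul_pow, ← pow_mul, hE, pow_add z, pow_add w]
      ring
    rw [Finset.sum_congr rfl step1, Finset.sum_comm]
    refine Finset.sum_congr rfl fun i _ => ?_
    rw [Finset.sum_add_distrib, ← Finset.sum_mul, ← Finset.sum_mul]
  rw [hswap]
  have hpt : ∀ i ∈ range (2 * N),
      (∑ k ∈ range (2 * N), ((mult m n k : ℕ) : ℂ) * eps N ^ (k * (2 * N - i))) *
          (z ^ (i + (N - 1)) * w ^ (2 * N - 1 - i)) +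
        (∑ k ∈ range (2 * N), ((mult m n k : ℕ) : ℂ) * eps N ^ (k * (2 * N - 1 - i))) *
          (z ^ i * w ^ ((2 * N - 1 - i) + (N - 1))) =
      ((if i = 0 then (N : ℂ) * ((m : ℂ) + (n : ℂ)) * (z ^ (N - 1) * w ^ (2 * N - 1)) else 0)
      + (if i = N then (N : ℂ) * ((m : ℂ) - (n : ℂ)) *
          (z ^ (N + (N - 1)) * w ^ (N - 1)) else 0))
      + ((if i = 2 * N - 1 then (N : ℂ) * ((m : ℂ) + (n : ℂ)) *
          (z ^ (2 * N - 1) * w ^ (N - 1)) else 0)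
      + (if i = N - 1 then (N : ℂ) * ((m : ℂ) - (n : ℂ)) *
          (z ^ (N - 1) * w ^ (N + (N - 1))) else 0)) := by
    intro i hi
    have hi2 : i < 2 * N := mem_range.mp hi
    rw [Ssum hN m n (2 * N - i), Ssum hN m n (2 * N - 1 - i)]
    -- A part
    have hApart : (if N ∣ 2 * N - i then
          (N : ℂ) * ((m : ℂ) + (n : ℂ) * (-1) ^ ((2 * N - i) / N)) else 0) *
          (z ^ (i + (N - 1)) * w ^ (2 * N - 1 - i)) =
        (if i = 0 then (N : ℂ) * ((m : ℂ) + (n : ℂ)) * (z ^ (N - 1) * w ^ (2 * N - 1)) else 0)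
        + (if i = N then (N : ℂ) * ((m : ℂ) - (n : ℂ)) *
            (z ^ (N + (N - 1)) * w ^ (N - 1)) else 0) := by
      rcases eq_or_ne i 0 with heq | h0
      · subst heq
        rw [show 2 * N - 0 = 2 * N by omega, if_pos (dvd_mul_left N 2),
          show 2 * N / N = 2 by
            rw [show 2 * N = N * 2 by ring]; exact Nat.mul_div_cancel_left 2 (by omega),
          if_pos rfl, if_neg (by omega : ¬(0 : ℕ) = N)]
        norm_num
      rcases eq_or_ne i N with heq | hNe
      · rw [heq] at h0 ⊢
        rw [show 2 * N - N = N by omega, if_pos (dvd_refl N),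
          Nat.div_self (by omega : 0 < N), pow_one, if_neg h0, if_pos rfl,
          show 2 * N - 1 - N = N - 1 by omega]
        ring
      · rw [if_neg ?hnd, if_neg h0, if_neg hNe, zero_mul, add_zero]
        case hnd =>
          intro hd
          rcases hdvd3 hN _ (by omega) hd with h | h | h <;> omega
    -- B part
    have hBpart : (if N ∣ 2 * N - 1 - i then
          (N : ℂ) * ((m : ℂ) + (n : ℂ) * (-1) ^ ((2 * N - 1 - i) / N)) else 0) *
          (z ^ i * w ^ ((2 * N - 1 - i) + (N - 1))) =
        (if i = 2 * N - 1 then (N : ℂ) * ((m : ℂ) + (n : ℂ)) *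
            (z ^ (2 * N - 1) * w ^ (N - 1)) else 0)
        + (if i = N - 1 then (N : ℂ) * ((m : ℂ) - (n : ℂ)) *
            (z ^ (N - 1) * w ^ (N + (N - 1))) else 0) := by
      rcases eq_or_ne i (2 * N - 1) with heq | h0
      · subst heq
        rw [show 2 * N - 1 - (2 * N - 1) = 0 by omega, if_pos (dvd_zero N),
          Nat.zero_div, pow_zero, if_pos rfl, if_neg (by omega : ¬2 * N - 1 = N - 1)]
        norm_num
      rcases eq_or_ne i (N - 1) with heq | hNe
      · rw [heq] at h0 ⊢
        rw [show 2 * N - 1 - (N - 1) = N by omega, if_pos (dvd_refl N),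
          Nat.div_self (by omega : 0 < N), pow_one, if_neg h0, if_pos rfl]
        ring
      · rw [if_neg ?hnd2, if_neg h0, if_neg hNe, zero_mul, zero_add]
        case hnd2 =>
          intro hd
          rcases hdvd3 hN _ (by omega) hd with h | h | h <;> omega
    rw [hApart, hBpart]
  rw [Finset.sum_congr rfl hpt]
  rw [Finset.sum_add_distrib, Finset.sum_add_distrib, Finset.sum_add_distrib]
  rw [Finset.sum_ite_eq' (range (2 * N)) 0, Finset.sum_ite_eq' (range (2 * N)) N,
    Finset.sum_ite_eq' (range (2 * N)) (2 * N - 1), Finset.sum_ite_eq' (range (2 * N)) (N - 1)]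
  rw [if_pos (mem_range.mpr (by omega)), if_pos (mem_range.mpr (by omega)),
    if_pos (mem_range.mpr (by omega)), if_pos (mem_range.mpr (by omega))]
  rw [show 2 * N - 1 = N + (N - 1) by omega]
  simp only [pow_add, pow_zero]
  ring

theorem q2_mHarmonic_L1 (N m n : ℕ) (hN : 1 ≤ N) (hnm : n ≤ m) :
    AnnL1 N m n ((zP ^ N - wP ^ N) ^ (2 * m + 1)) := by
  unfold AnnL1
  have hz0 : pderiv (0 : Fin 2) zP = 1 := pderiv_X_self 0
  have hw0 : pderiv (0 : Fin 2) wP = 0 := pderiv_X_of_ne (by decide)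
  have hz1 : pderiv (1 : Fin 2) zP = 0 := pderiv_X_of_ne (by decide)
  have hw1 : pderiv (1 : Fin 2) wP = 1 := pderiv_X_self 1
  set F : R2 := zP ^ N - wP ^ N with hF
  have hF0 : pderiv (0 : Fin 2) F = (N : R2) * zP ^ (N - 1) := by
    rw [hF, map_sub, pderiv_pow, pderiv_pow, hz0, hw0]
    ring
  have hF1 : pderiv (1 : Fin 2) F = -((N : R2) * wP ^ (N - 1)) := by
    rw [hF, map_sub, pderiv_pow, pderiv_pow, hz1, hw1]
    ring
  have hdw : pderiv (1 : Fin 2) (F ^ (2 * m + 1)) =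
      -(((2 * m + 1 : ℕ) : R2) * F ^ (2 * m) * ((N : R2) * wP ^ (N - 1))) := by
    rw [pderiv_pow, hF1]
    push_cast
    ring_nf
  have hdz : pderiv (0 : Fin 2) (F ^ (2 * m + 1)) =
      ((2 * m + 1 : ℕ) : R2) * F ^ (2 * m) * ((N : R2) * zP ^ (N - 1)) := by
    rw [pderiv_pow, hF0]
    push_cast
    ring_nf
  have hdzw : pderiv (0 : Fin 2) (pderiv (1 : Fin 2) (F ^ (2 * m + 1))) =
      -(((2 * m + 1 : ℕ) : R2) * (((2 * m : ℕ) : R2) * F ^ (2 * m - 1) *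
        ((N : R2) * zP ^ (N - 1))) * ((N : R2) * wP ^ (N - 1))) := by
    rw [hdw, map_neg, pderiv_mul, pderiv_mul, pderiv_pow, hF0]
    have hCn : pderiv (0 : Fin 2) ((2 * m + 1 : ℕ) : R2) = 0 := by
      rw [← map_natCast (C : ℂ →+* R2)]
      exact pderiv_C
    have hw' : pderiv (0 : Fin 2) ((N : R2) * wP ^ (N - 1)) = 0 := by
      rw [pderiv_mul, pderiv_pow, hw0, ← map_natCast (C : ℂ →+* R2), pderiv_C]
      ring
    rw [hCn, hw']
    push_cast
    ring
  rw [prodR hN, hdzw, hdz, hdw,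
    Finset.sum_congr rfl (fun k hk => by rw [eraseR hN hk])]
  apply MvPolynomial.funext
  intro x
  have hK := Ksum hN m n (x 0) (x 1)
  simp only [map_sum, map_mul, map_sub, map_add, map_neg, map_pow, eval_C, eval_X,
    map_natCast, map_ofNat, map_one, zP, wP]
  set Z := x 0
  set W := x 1
  have hFz : (Z ^ N - W ^ N) * (Z ^ N + W ^ N) = Z ^ (2 * N) - W ^ (2 * N) := by
    rw [show 2 * N = N * 2 by ring, pow_mul, pow_mul]
    ring
  have hFm : ((2 * m : ℕ) : ℂ) * ((Z ^ N - W ^ N) * (Z ^ N - W ^ N) ^ (2 * m - 1)) =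
      ((2 * m : ℕ) : ℂ) * (Z ^ N - W ^ N) ^ (2 * m) := by
    rcases Nat.eq_zero_or_pos m with rfl | hm
    · norm_num
    · rw [← pow_succ']
      congr 2
      omega
  simp only [hF, zP, wP, map_sub, map_pow, eval_X]
  rw [Finset.sum_congr rfl (fun k (hk : k ∈ range (2 * N)) =>
    (by ring :
      (((mult m n k : ℕ) : ℂ) *
          -∑ i ∈ Finset.range (2 * N), Z ^ i * (eps N ^ k * W) ^ (2 * N - 1 - i)) *
        (eps N ^ k * (((2 * m + 1 : ℕ) : ℂ) * ((x 0) ^ N - (x 1) ^ N) ^ (2 * m) *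
            ((N : ℂ) * Z ^ (N - 1))) -
          -(((2 * m + 1 : ℕ) : ℂ) * ((x 0) ^ N - (x 1) ^ N) ^ (2 * m) *
            ((N : ℂ) * W ^ (N - 1)))) =
      (-(((2 * m + 1 : ℕ) : ℂ) * (N : ℂ) * ((x 0) ^ N - (x 1) ^ N) ^ (2 * m))) *
        ((((mult m n k : ℕ) : ℂ) *
            ∑ i ∈ Finset.range (2 * N), Z ^ i * (eps N ^ k * W) ^ (2 * N - 1 - i)) *
          (eps N ^ k * Z ^ (N - 1) + W ^ (N - 1))))),
    ← Finset.mul_sum, hK]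
  push_cast at hFm ⊢
  linear_combination
    (-( (2 * (m : ℂ) + 1) * ((N : ℂ))^2 * Z ^ (N - 1) * W ^ (N - 1) * (Z ^ N + W ^ N))) * hFm +
    (-( (2 * (m : ℂ) + 1) * (2 * (m : ℂ)) * ((N : ℂ))^2 * Z ^ (N - 1) * W ^ (N - 1) *
      (Z ^ N - W ^ N) ^ (2 * m - 1))) * hFz
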